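/- Let (α,β) ∈ V with α ≠ β, let m ∈ ℕ (m ≥ 1) and s ∈ ℕ₀. Then the function ι(m,m+s;·) : [1, 2m−1] → ℝ has at most one zero. Moreover, if m ≥ 2 or a ≥ 0, then ι(m,m+s;1) ≥ 0. -/

import Mathlib

open Polynomial Finset

noncomputable def poch (c : ℝ) (k : ℕ) : ℝ := (ascPochhammer ℝ k).eval c

/-- Jacobi polynomial `R_n^{(α,β)}`, normalized by `R_n^{(α,β)}(1) = 1`. -/
noncomputable def jacobiR (α β : ℝ) (n : ℕ) : Polynomial ℝ :=
  ∑ k ∈ Finset.range (n + 1),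
    Polynomial.C (poch (-(n : ℝ)) k * poch ((n : ℝ) + α + β + 1) k /
      (poch (α + 1) k * 2 ^ k * (Nat.factorial k : ℝ))) * (1 - Polynomial.X) ^ k

/-- Generalized Chebyshev polynomial `T_n^{(α,β)}`. -/
noncomputable def genCheb (α β : ℝ) (n : ℕ) : Polynomial ℝ :=
  if n % 2 = 0 then (jacobiR α β (n / 2)).comp (2 * Polynomial.X ^ 2 - 1)
  else Polynomial.X * (jacobiR α (β + 1) (n / 2)).comp (2 * Polynomial.X ^ 2 - 1)

/-- Gasper's set `V` (with `a = α+β+1`, `b = α−β`). -/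
def Vset : Set (ℝ × ℝ) := { p | -1 < p.1 ∧ -1 < p.2 ∧
  ((p.1 + p.2 + 1) ^ 2 - 7 * (p.1 + p.2 + 1) - 24) * (p.1 - p.2) ^ 2 ≤
    (p.1 + p.2 + 1) * ((p.1 + p.2 + 1) + 5) * ((p.1 + p.2 + 1) + 3) ^ 2 ∧
  0 ≤ p.1 - p.2 }

/-- The set `V′`. -/
def V'set : Set (ℝ × ℝ) := { p | -1 < p.1 ∧ -1 < p.2 ∧
  0 ≤ (p.1 + p.2 + 1) ^ 2 + 2 * (p.1 - p.2) ^ 2 + 3 * (p.1 + p.2 + 1) ∧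
  0 ≤ p.1 - p.2 }

/-- The set `Δ`. -/
def Dset : Set (ℝ × ℝ) := { p | -1 < p.1 ∧ -1 < p.2 ∧
  0 ≤ p.1 + p.2 + 1 ∧ 0 ≤ p.1 - p.2 }

/-- The coefficient function `ι(m, m+s; ·)` (with parameters `a`, `b`). -/
noncomputable def iotaF (a b : ℝ) (m s : ℕ) (j : ℝ) : ℝ :=
  b * ((2 * (m : ℝ) - j) * (2 * (m : ℝ) + 2 * (s : ℝ) + j + 2 * a) *
        ((2 * (s : ℝ) + j + 1) * (j + 1)) / (2 * (s : ℝ) + 2 * j + a + 1)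
      - (2 * (m : ℝ) - j + 1) * (2 * (m : ℝ) + 2 * (s : ℝ) + j + 2 * a - 1) *
        ((2 * (s : ℝ) + j) * j) / (2 * (s : ℝ) + 2 * j + a - 1))

/-- The coefficient function `θ(m, m+s; ·)` (with parameters `a`, `b`). -/
noncomputable def thetaF (a b : ℝ) (m s : ℕ) (j : ℝ) : ℝ :=
  (2 * (m : ℝ) - j + a - 1) * (2 * (m : ℝ) + 2 * (s : ℝ) + j + a + 1) *
    ((2 * (s : ℝ) + j + 1) * (2 * (s : ℝ) + 2 * j + a - b + 1)) /
    ((2 * (s : ℝ) + 2 * j + a + 1) * (2 * (s : ℝ) + 2 * j + a + 2)) * (j + 1)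

/-- The coefficient function `κ(m, m+s; ·)` (with parameters `a`, `b`). -/
noncomputable def kappaF (a b : ℝ) (m s : ℕ) (j : ℝ) : ℝ :=
  (2 * (m : ℝ) - j + 1) * (2 * (m : ℝ) + 2 * (s : ℝ) + j + 2 * a - 1) *
    ((2 * (s : ℝ) + j + a - 1) * (2 * (s : ℝ) + 2 * j + a + b - 1)) /
    ((2 * (s : ℝ) + 2 * j + a - 2) * (2 * (s : ℝ) + 2 * j + a - 1)) * (j + a - 1)

/-- Recurrence coefficient `a^T_{2k+1} = (2k+a+b+1)/(4k+2a+2)`. -/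
noncomputable def aTc (a b : ℝ) (k : ℕ) : ℝ :=
  (2 * (k : ℝ) + a + b + 1) / (4 * (k : ℝ) + 2 * a + 2)

/-- Recurrence coefficient `c^T_{2k+1} = (2k+a−b+1)/(4k+2a+2)`. -/
noncomputable def cTc (a b : ℝ) (k : ℕ) : ℝ :=
  (2 * (k : ℝ) + a - b + 1) / (4 * (k : ℝ) + 2 * a + 2)

/-- The auxiliary function `p`. -/
noncomputable def pF (a b : ℝ) (m s j : ℕ) : ℝ :=
  cTc a b (s + j + 1) / aTc a b (s + j) *
    (iotaF (a + 1) (b - 1) m s (j : ℝ) / thetaF (a + 1) (b - 1) m s (j : ℝ))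

/-- The auxiliary function `q`. -/
noncomputable def qF (a b : ℝ) (m s j : ℕ) : ℝ :=
  (cTc a b (s + j) * cTc a b (s + j + 1)) / (aTc a b (s + j - 1) * aTc a b (s + j)) *
    (kappaF (a + 1) (b - 1) m s (j : ℝ) / thetaF (a + 1) (b - 1) m s (j : ℝ))


private lemma key_a' (a b : ℝ) (ha : -1 < a) (hb : 0 < b) (hba : b < a + 1)
    (hV : (a^2 - 7*a - 24) * b^2 ≤ a * (a + 5) * (a + 3)^2) :
    0 < 4*a^2 + 11*a + 3 := by
  by_contra h
  push_neg at h
  have haneg : a < 0 := by nlinarith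
  have h24 : a^2 - 7*a - 24 < 0 := by nlinarith
  have hident : a * (a + 5) * (a + 3)^2 ≤ (a^2 - 7*a - 24) * (a+1)^2 := by nlinarith
  have hb2 : (a+1)^2 ≤ b^2 := by
    have := le_trans hV hident
    nlinarith
  nlinarith

private lemma a_gt' (a : ℝ) (ha : -1 < a) (h4 : 0 < 4*a^2 + 11*a + 3) : -1/3 < a := by
  by_contra h
  push_neg at h
  nlinarith [mul_nonneg (by linarith : (0:ℝ) ≤ -(3*a+1)) (by linarith : (0:ℝ) ≤ a+1),
    mul_nonneg (by linarith : (0:ℝ) ≤ -(3*a+1)) (by linarith : (0:ℝ) ≤ 3*a+20)]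

private lemma N1_pos' (m s a : ℝ) (hm : 2 ≤ m) (hs : 0 ≤ s) (ha : -1/3 < a)
    (h4 : 0 < 4*a^2 + 11*a + 3) :
    0 < 16*m^2*s^2 + 8*m^2*s*a + 16*m^2*s + 12*m^2*a + 4*m^2 + 16*m*s^3 + 24*m*s^2*a
      + 16*m*s^2 + 8*m*s*a^2 + 28*m*s*a + 4*m*s + 12*m*a^2 + 4*m*a - 16*s^3 - 24*s^2*a
      - 32*s^2 - 8*s*a^2 - 36*s*a - 20*s - 8*a^2 - 12*a - 4 := by
  have hu : (0:ℝ) ≤ m - 2 := by linarith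
  have h31 : (0:ℝ) ≤ 3*a + 1 := by linarith
  have hc : 0 < 2*(m-2)*s + 3*(m-2) + 2*s + 4 := by nlinarith [mul_nonneg hu hs]
  nlinarith [mul_pos hc h4,
    mul_nonneg (mul_nonneg (mul_nonneg hu hu) hs) hs,
    mul_nonneg (mul_nonneg (mul_nonneg hu hu) hs) h31,
    mul_nonneg (mul_nonneg hu hu) hs,
    mul_nonneg (mul_nonneg hu hu) h31,
    mul_nonneg (mul_nonneg (mul_nonneg hu hs) hs) hs,
    mul_nonneg (mul_nonneg (mul_nonneg hu hs) hs) h31,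
    mul_nonneg (mul_nonneg hu hs) hs,
    mul_nonneg (mul_nonneg hu hs) h31,
    mul_nonneg hu hs,
    mul_nonneg hu h31,
    mul_nonneg (mul_nonneg hs hs) h31,
    mul_nonneg hs h31,
    mul_nonneg (mul_nonneg hs hs) hs,
    mul_nonneg hs hs]

private lemma N1_nonneg' (m s a : ℝ) (hm : 1 ≤ m) (hs : 0 ≤ s) (ha : 0 ≤ a) :
    0 ≤ 16*m^2*s^2 + 8*m^2*s*a + 16*m^2*s + 12*m^2*a + 4*m^2 + 16*m*s^3 + 24*m*s^2*a
      + 16*m*s^2 + 8*m*s*a^2 + 28*m*s*a + 4*m*s + 12*m*a^2 + 4*m*a - 16*s^3 - 24*s^2*a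
      - 32*s^2 - 8*s*a^2 - 36*s*a - 20*s - 8*a^2 - 12*a - 4 := by
  have hu : (0:ℝ) ≤ m - 1 := by linarith
  nlinarith [mul_nonneg (mul_nonneg (mul_nonneg hu hu) hs) hs,
    mul_nonneg (mul_nonneg (mul_nonneg hu hu) hs) ha,
    mul_nonneg (mul_nonneg hu hu) hs,
    mul_nonneg (mul_nonneg hu hu) ha,
    mul_nonneg hu hu,
    mul_nonneg (mul_nonneg (mul_nonneg hu hs) hs) hs,
    mul_nonneg (mul_nonneg (mul_nonneg hu hs) hs) ha,
    mul_nonneg (mul_nonneg hu hs) hs,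
    mul_nonneg (mul_nonneg (mul_nonneg hu hs) ha) ha,
    mul_nonneg (mul_nonneg hu hs) ha,
    mul_nonneg hu hs,
    mul_nonneg (mul_nonneg hu ha) ha,
    mul_nonneg hu ha,
    mul_nonneg ha ha,
    hu, hs, ha]

private lemma iota_zero_quad' (a b M S j : ℝ) (ha : -1 < a) (hb : b ≠ 0) (hS : 0 ≤ S)
    (hj : 1 ≤ j)
    (hz : b * ((2*M - j) * (2*M + 2*S + j + 2*a) * ((2*S + j + 1)*(j+1)) / (2*S + 2*j + a + 1)
        - (2*M - j + 1) * (2*M + 2*S + j + 2*a - 1) * ((2*S + j)*j) / (2*S + 2*j + a - 1)) = 0) :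
    -6*(j^2+(2*S+a)*j)^2 + (8*M^2+8*M*S+8*M*a-8*S^2-8*S*a-2*a+2)*(j^2+(2*S+a)*j)
      + (16*M^2*S^2+8*M^2*S*a+4*M^2*a-4*M^2+16*M*S^3+24*M*S^2*a+8*M*S*a^2+4*M*S*a-4*M*S+4*M*a^2-4*M*a) = 0 := by
  have hD1 : (2*S + 2*j + a + 1) ≠ 0 := by intro h; nlinarith
  have hD2 : (2*S + 2*j + a - 1) ≠ 0 := by intro h; nlinarith
  rcases mul_eq_zero.mp hz with h | h
  · exact absurd h hb
  · rw [sub_eq_zero, div_eq_div_iff hD1 hD2] at h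
    linear_combination h

set_option maxHeartbeats 1000000 in
/-- For `(α,β) ∈ V` with `α ≠ β`, the function `ι(m,m+s;·)` has at most one zero
on `[1, 2m−1]`; moreover, if `m ≥ 2` or `a ≥ 0`, then `ι(m,m+s;1) ≥ 0`. -/
theorem stmt7 (α β : ℝ) (hV : (α, β) ∈ Vset) (hab : α ≠ β)
    (m : ℕ) (hm : 1 ≤ m) (s : ℕ) :
    (∀ j₁ ∈ Set.Icc (1 : ℝ) (2 * (m : ℝ) - 1), ∀ j₂ ∈ Set.Icc (1 : ℝ) (2 * (m : ℝ) - 1),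
      iotaF (α + β + 1) (α - β) m s j₁ = 0 → iotaF (α + β + 1) (α - β) m s j₂ = 0 →
        j₁ = j₂) ∧
    ((2 ≤ m ∨ 0 ≤ α + β + 1) → 0 ≤ iotaF (α + β + 1) (α - β) m s 1) := by
  obtain ⟨hα, hβ, hVi, hb0⟩ := hV
  simp only at hα hβ hVi hb0
  have hbpos : 0 < α - β := lt_of_le_of_ne hb0 (fun h => hab (by linarith))
  have ha : (-1:ℝ) < α + β + 1 := by linarith
  have hba : α - β < (α + β + 1) + 1 := by linarith
  have h4 : 0 < 4*(α+β+1)^2 + 11*(α+β+1) + 3 := by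
    refine key_a' (α+β+1) (α-β) ha hbpos hba ?_
    nlinarith [hVi]
  have h13 : -1/3 < α + β + 1 := a_gt' _ ha h4
  set A : ℝ := α + β + 1 with hAdef
  set M : ℝ := (m : ℝ) with hMdef
  set S : ℝ := (s : ℝ) with hSdef
  have hS : (0:ℝ) ≤ S := Nat.cast_nonneg s
  have hM1 : (1:ℝ) ≤ M := by rw [hMdef]; exact_mod_cast hm
  constructor
  · intro j₁ hj₁ j₂ hj₂ h1 h2
    obtain ⟨hj₁l, hj₁u⟩ := hj₁
    obtain ⟨hj₂l, hj₂u⟩ := hj₂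
    rcases eq_or_lt_of_le hm with hm1 | hm2
    · have hMeq : M = 1 := by rw [hMdef, ← hm1]; norm_num
      rw [hMeq] at hj₁u hj₂u
      have e1 : j₁ = 1 := le_antisymm (by linarith) hj₁l
      have e2 : j₂ = 1 := le_antisymm (by linarith) hj₂l
      rw [e1, e2]
    · have hM2 : (2:ℝ) ≤ M := by rw [hMdef]; exact_mod_cast hm2
      by_contra hne
      have E1 := iota_zero_quad' A (α-β) M S j₁ ha (ne_of_gt hbpos) hS hj₁l (by
        simpa [iotaF] using h1)
      have E2 := iota_zero_quad' A (α-β) M S j₂ ha (ne_of_gt hbpos) hS hj₂l (by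
        simpa [iotaF] using h2)
      have hwne : (j₁^2+(2*S+A)*j₁) ≠ (j₂^2+(2*S+A)*j₂) := by
        intro h
        have hfac : (j₁ - j₂) * (j₁ + j₂ + 2*S + A) = 0 := by linear_combination h
        rcases mul_eq_zero.mp hfac with h' | h'
        · exact hne (by linarith)
        · linarith
      have hS1 : (8*M^2+8*M*S+8*M*A-8*S^2-8*S*A-2*A+2)
          = 6*((j₁^2+(2*S+A)*j₁) + (j₂^2+(2*S+A)*j₂)) := by
        have h0 : ((j₁^2+(2*S+A)*j₁) - (j₂^2+(2*S+A)*j₂)) *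
            ((8*M^2+8*M*S+8*M*A-8*S^2-8*S*A-2*A+2)
              - 6*((j₁^2+(2*S+A)*j₁) + (j₂^2+(2*S+A)*j₂))) = 0 := by
          linear_combination E1 - E2
        have := (mul_eq_zero.mp h0).resolve_left (sub_ne_zero.mpr hwne)
        linarith
      have hS0 : (16*M^2*S^2+8*M^2*S*A+4*M^2*A-4*M^2+16*M*S^3+24*M*S^2*A+8*M*S*A^2
            +4*M*S*A-4*M*S+4*M*A^2-4*M*A)
          = -6*((j₁^2+(2*S+A)*j₁) * (j₂^2+(2*S+A)*j₂)) := by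
        linear_combination E1 - (j₁^2+(2*S+A)*j₁) * hS1
      have hL1 : 2*S + A + 1 ≤ j₁^2+(2*S+A)*j₁ := by
        linarith [mul_nonneg (by linarith : (0:ℝ) ≤ j₁ - 1)
          (by linarith : (0:ℝ) ≤ j₁ + 2*S + A + 1)]
      have hL2 : 2*S + A + 1 ≤ j₂^2+(2*S+A)*j₂ := by
        linarith [mul_nonneg (by linarith : (0:ℝ) ≤ j₂ - 1)
          (by linarith : (0:ℝ) ≤ j₂ + 2*S + A + 1)]
      have hN1 := N1_pos' M S A hM2 hS h13 h4
      have hS1L : (8*M^2+8*M*S+8*M*A-8*S^2-8*S*A-2*A+2) * (2*S+A+1)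
          = 6*((j₁^2+(2*S+A)*j₁) + (j₂^2+(2*S+A)*j₂)) * (2*S+A+1) := by
        rw [hS1]
      have hP : 0 ≤ ((j₁^2+(2*S+A)*j₁) - (2*S+A+1)) * ((j₂^2+(2*S+A)*j₂) - (2*S+A+1)) :=
        mul_nonneg (by linarith) (by linarith)
      linarith only [hN1, hS1L, hS0, hP]
  · intro hor
    have hd1 : (0:ℝ) < 2*S + A + 3 := by linarith
    have hd2 : (0:ℝ) < 2*S + A + 1 := by linarith
    have heq : iotaF A (α - β) m s 1
        = (α - β) * (16*M^2*S^2 + 8*M^2*S*A + 16*M^2*S + 12*M^2*A + 4*M^2 + 16*M*S^3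
            + 24*M*S^2*A + 16*M*S^2 + 8*M*S*A^2 + 28*M*S*A + 4*M*S + 12*M*A^2 + 4*M*A
            - 16*S^3 - 24*S^2*A - 32*S^2 - 8*S*A^2 - 36*S*A - 20*S - 8*A^2 - 12*A - 4)
          / ((2*S+A+3)*(2*S+A+1)) := by
      simp only [iotaF]
      rw [div_sub_div _ _ (by linarith : (2*S + 2*1 + A + 1) ≠ 0)
        (by linarith : (2*S + 2*1 + A - 1) ≠ 0)]
      rw [← mul_div_assoc, div_eq_div_iff
        (ne_of_gt (mul_pos (by linarith : (0:ℝ) < 2*S + 2*1 + A + 1)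
          (by linarith : (0:ℝ) < 2*S + 2*1 + A - 1)))
        (ne_of_gt (mul_pos hd1 hd2))]
      ring
    rw [heq]
    have hN1 : 0 ≤ 16*M^2*S^2 + 8*M^2*S*A + 16*M^2*S + 12*M^2*A + 4*M^2 + 16*M*S^3
        + 24*M*S^2*A + 16*M*S^2 + 8*M*S*A^2 + 28*M*S*A + 4*M*S + 12*M*A^2 + 4*M*A
        - 16*S^3 - 24*S^2*A - 32*S^2 - 8*S*A^2 - 36*S*A - 20*S - 8*A^2 - 12*A - 4 := by
      rcases hor with hm2 | ha0
      · exact (N1_pos' M S A (by rw [hMdef]; exact_mod_cast hm2) hS h13 h4).le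
      · exact N1_nonneg' M S A hM1 hS ha0
    exact div_nonneg (mul_nonneg hbpos.le hN1) (by positivity)
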